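/- Let T be a self-adjoint bounded operator on a complex Hilbert space H with ‖T‖ = 1, and suppose T is given (in an orthonormal basis indexed by I) by a matrix with nonnegative real entries. Then 1 belongs to the spectrum of T. -/

import Mathlib

open ComplexConjugate
open scoped ENNReal NNReal

lemma aux_sup {E : Type*} [NormedAddCommGroup E] [InnerProductSpace ℂ E] [CompleteSpace E]
    (T : E →L[ℂ] E) (hT : IsSelfAdjoint T) (hnorm : ‖T‖ = 1) {ε : ℝ} (hε : 0 < ε) :
    ∃ ζ : E, ‖ζ‖ = 1 ∧ 1 - ε ≤ ‖(inner ℂ (T ζ) ζ : ℂ)‖ := by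
  by_contra h
  push_neg at h
  set M : ℝ := 1 - ε with hM
  have hTne : T ≠ 0 := by
    intro h0
    rw [h0] at hnorm
    simp at hnorm
  obtain ⟨x₀, hx₀⟩ : ∃ x : E, T x ≠ 0 := by
    by_contra hc
    push_neg at hc
    exact hTne (ContinuousLinearMap.ext fun x => by simp [hc x])
  have hx₀ne : x₀ ≠ 0 := fun h0 => hx₀ (by simp [h0])
  have hunit : ∀ x : E, x ≠ 0 → ‖((‖x‖⁻¹ : ℝ) : ℂ) • x‖ = 1 := by
    intro x hx
    rw [norm_smul]
    simp only [Complex.norm_real, norm_inv, norm_norm]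
    field_simp
  have hM0 : 0 ≤ M :=
    le_of_lt (lt_of_le_of_lt (norm_nonneg _) (h _ (hunit x₀ hx₀ne)))
  have claim1 : ∀ x : E, ‖(inner ℂ (T x) x : ℂ)‖ ≤ M * ‖x‖ ^ 2 := by
    intro x
    rcases eq_or_ne x 0 with rfl | hx
    · simp
    · set u : E := ((‖x‖⁻¹ : ℝ) : ℂ) • x with hu
      have hun : ‖u‖ = 1 := hunit x hx
      have hxu : x = ((‖x‖ : ℝ) : ℂ) • u := by
        rw [hu, smul_smul]
        norm_cast
        rw [mul_inv_cancel₀ (norm_ne_zero_iff.2 hx)]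
        simp
      have hcalc : (inner ℂ (T x) x : ℂ) = ((‖x‖ : ℝ) : ℂ) * (conj ((‖x‖ : ℝ) : ℂ)) * inner ℂ (T u) u := by
        conv_lhs => rw [hxu]
        rw [map_smul, inner_smul_left, inner_smul_right]
        ring
      rw [hcalc, norm_mul, norm_mul]
      simp only [Complex.norm_real, norm_norm, RCLike.norm_conj]
      calc ‖x‖ * ‖x‖ * ‖(inner ℂ (T u) u : ℂ)‖ ≤ ‖x‖ * ‖x‖ * M :=
            mul_le_mul_of_nonneg_left (le_of_lt (h u hun)) (by positivity)
        _ = M * ‖x‖ ^ 2 := by ring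
  have hsymm : ∀ x y : E, (inner ℂ (T y) x : ℂ) = conj (inner ℂ (T x) y : ℂ) := by
    intro x y
    rw [← inner_conj_symm]
    exact congrArg (starRingEnd ℂ) (hT.isSymmetric x y).symm
  have claim2 : ∀ x y : E, 4 * Complex.re (inner ℂ (T x) y : ℂ) ≤ 2 * M * (‖x‖ ^ 2 + ‖y‖ ^ 2) := by
    intro x y
    have key : (inner ℂ (T (x + y)) (x + y) : ℂ) - inner ℂ (T (x - y)) (x - y)
        = 2 * (inner ℂ (T x) y + conj (inner ℂ (T x) y : ℂ)) := by
      rw [map_add, map_sub, inner_add_left, inner_add_right, inner_add_right,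
        inner_sub_left, inner_sub_right, inner_sub_right, ← hsymm x y]
      ring
    have hre : Complex.re ((inner ℂ (T (x + y)) (x + y) : ℂ)) -
        Complex.re ((inner ℂ (T (x - y)) (x - y) : ℂ))
        = 4 * Complex.re (inner ℂ (T x) y : ℂ) := by
      have := congrArg Complex.re key
      rw [Complex.sub_re] at this
      rw [this, Complex.add_conj]
      simp [Complex.mul_re]
      ring
    have a1 : Complex.re ((inner ℂ (T (x+y)) (x+y) : ℂ)) ≤ M * ‖x + y‖ ^ 2 :=
      le_trans (Complex.re_le_norm _) (claim1 _)
    have a2 : |(inner ℂ (T (x-y)) (x-y) : ℂ).re| ≤ M * ‖x - y‖ ^ 2 :=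
      le_trans (Complex.abs_re_le_norm _) (claim1 _)
    have a2' := (abs_le.1 a2).1
    have hpar : ‖x + y‖ ^ 2 + ‖x - y‖ ^ 2 = 2 * (‖x‖ ^ 2 + ‖y‖ ^ 2) := by
      have := parallelogram_law_with_norm ℂ x y
      nlinarith [this]
    nlinarith [hre, a1, a2', hpar]
  have claim3 : ‖T‖ ≤ M := by
    apply ContinuousLinearMap.opNorm_le_bound _ hM0
    intro x
    have key : ∀ z : E, ‖z‖ = 1 → ‖T z‖ ≤ M := by
      intro z hz
      rcases eq_or_ne (T z) 0 with hz0 | hz0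
      · rw [hz0]; simpa using hM0
      set y : E := ((‖T z‖⁻¹ : ℝ) : ℂ) • T z with hy
      have hyn : ‖y‖ = 1 := hunit _ hz0
      have hre : Complex.re (inner ℂ (T z) y : ℂ) = ‖T z‖ := by
        rw [hy, inner_smul_right, inner_self_eq_norm_sq_to_K]
        norm_cast
        field_simp
        have hn : ‖T z‖ ≠ 0 := norm_ne_zero_iff.2 hz0
        show (((1 / ‖T z‖ : ℝ) : ℂ) * ((‖T z‖ ^ 2 : ℝ) : ℂ)).re = ‖T z‖
        rw [Complex.re_ofReal_mul, Complex.ofReal_re, sq]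
        field_simp
      have h2 := claim2 z y
      rw [hre, hz, hyn] at h2
      linarith
    rcases eq_or_ne x 0 with rfl | hx
    · simp
    set u : E := ((‖x‖⁻¹ : ℝ) : ℂ) • x with hu
    have hun : ‖u‖ = 1 := hunit x hx
    have hTu := key u hun
    have hTx : T x = ((‖x‖ : ℝ) : ℂ) • T u := by
      rw [hu, map_smul, smul_smul]
      norm_cast
      rw [mul_inv_cancel₀ (norm_ne_zero_iff.2 hx)]
      simp
    rw [hTx, norm_smul]
    simp only [Complex.norm_real, norm_norm]
    calc ‖x‖ * ‖T u‖ ≤ ‖x‖ * M := mul_le_mul_of_nonneg_left hTu (norm_nonneg x)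
      _ = M * ‖x‖ := mul_comm _ _
  rw [hnorm, hM] at claim3
  linarith

set_option maxHeartbeats 1000000 in
set_option synthInstance.maxHeartbeats 400000 in
/-- A self-adjoint contraction of norm one on `ℓ²(I)` whose matrix entries
(in the standard orthonormal basis) are nonnegative reals has `1` in its spectrum. -/
theorem stmt_1 {I : Type*} [DecidableEq I]
    (T : lp (fun _ : I => ℂ) 2 →L[ℂ] lp (fun _ : I => ℂ) 2)
    (hT : IsSelfAdjoint T) (hnorm : ‖T‖ = 1)
    (hpos : ∀ i j : I, ∃ r : ℝ, 0 ≤ r ∧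
      (inner ℂ (T (lp.single 2 j (1 : ℂ))) (lp.single 2 i (1 : ℂ)) : ℂ) = (r : ℂ)) :
    (1 : ℂ) ∈ spectrum ℂ T := by
  classical
  set L := lp (fun _ : I => ℂ) 2 with hL
  set e : I → L := fun i => lp.single 2 i (1 : ℂ) with he
  -- matrix entries
  set a : I → I → ℝ := fun i j => (hpos i j).choose with ha
  have ha0 : ∀ i j, 0 ≤ a i j := fun i j => (hpos i j).choose_spec.1
  have haeq : ∀ i j, (inner ℂ (T (e j)) (e i) : ℂ) = ((a i j : ℝ) : ℂ) :=
    fun i j => (hpos i j).choose_spec.2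
  -- entries of T applied to basis vectors
  have entry : ∀ i j : I, (T (e i) : ∀ _ : I, ℂ) j = ((a j i : ℝ) : ℂ) := by
    intro i j
    have h1 : (inner ℂ (T (e i)) (e j) : ℂ) = ((a j i : ℝ) : ℂ) := haeq j i
    rw [lp.inner_single_right] at h1
    simp only [RCLike.inner_apply', map_one, mul_one] at h1
    have := congrArg (starRingEnd ℂ) h1
    rwa [Complex.conj_conj, Complex.conj_ofReal] at this
  -- T acting coordinatewise
  have hTapply : ∀ (x : L) (i : I),
      HasSum (fun j => ((a j i : ℝ) : ℂ) * x j) ((T x : ∀ _ : I, ℂ) i) := by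
    intro x i
    have h1 : (inner ℂ (e i) (T x) : ℂ) = (T x : ∀ _ : I, ℂ) i := by
      rw [he]
      rw [lp.inner_single_left]
      simp [RCLike.inner_apply]
    have h2 : (inner ℂ (T (e i)) x : ℂ) = (inner ℂ (e i) (T x) : ℂ) := by
      have h2' := ContinuousLinearMap.adjoint_inner_left T x (e i)
      rwa [hT.adjoint_eq] at h2'
    have h3 := lp.hasSum_inner (𝕜 := ℂ) (T (e i)) x
    rw [h2, h1] at h3
    convert h3 using 2 with j
    rfl
    rw [RCLike.inner_apply', entry i j, Complex.conj_ofReal]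
  -- the approximate-positive-eigenvector step
  have key : ∀ ε : ℝ, 0 < ε → ∃ ξ : L, ‖ξ‖ = 1 ∧ 1 - ε ≤ Complex.re (inner ℂ (T ξ) ξ : ℂ) := by
    intro ε hε
    obtain ⟨ζ, hζ1, hζ2⟩ := aux_sup T hT hnorm hε
    -- the vector of absolute values
    have h2pos : 0 < (2 : ℝ≥0∞).toReal := by norm_num
    have hmem : Memℓp (fun i => ((‖ζ i‖ : ℝ) : ℂ)) 2 := by
      apply memℓp_gen
      have hsummable := (memℓp_gen_iff h2pos).1 (lp.memℓp ζ)
      apply hsummable.congr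
      intro i
      simp
    set ξ : L := ⟨fun i => ((‖ζ i‖ : ℝ) : ℂ), hmem⟩ with hξ
    have hξcoe : ∀ i, (ξ : ∀ _ : I, ℂ) i = ((‖ζ i‖ : ℝ) : ℂ) := fun i => rfl
    have hξnorm : ‖ξ‖ = 1 := by
      rw [← hζ1]
      rw [lp.norm_eq_tsum_rpow h2pos,
        lp.norm_eq_tsum_rpow h2pos]
      congr 1
      apply tsum_congr
      intro i
      rw [hξcoe]
      simp
    -- the real coordinates of T ξ
    set s : I → ℝ := fun i => Complex.re ((T ξ : ∀ _ : I, ℂ) i) with hsdef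
    have hs : ∀ i, HasSum (fun j => a j i * ‖ζ j‖) (s i) := by
      intro i
      have := (hTapply ξ i).mapL Complex.reCLM
      convert this using 2 with j
      rw [hξcoe]
      simp [← Complex.ofReal_mul]
      rfl
    have him : ∀ i, Complex.im ((T ξ : ∀ _ : I, ℂ) i) = 0 := by
      intro i
      have := (hTapply ξ i).mapL Complex.imCLM
      have h0 : HasSum (fun _ : I => (0 : ℝ)) (Complex.im ((T ξ : ∀ _ : I, ℂ) i)) := by
        convert this using 2 with j
        rw [hξcoe]
        simp [← Complex.ofReal_mul]
        rfl
      simpa using h0.unique hasSum_zero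
    have hTξcoord : ∀ i, (T ξ : ∀ _ : I, ℂ) i = ((s i : ℝ) : ℂ) := by
      intro i
      apply Complex.ext
      · simp [hsdef]
      · simp [him i]
    have hs0 : ∀ i, 0 ≤ s i := by
      intro i
      exact hasSum_le (fun j => mul_nonneg (ha0 j i) (norm_nonneg _)) hasSum_zero (hs i)
    -- coordinatewise bound
    have hbound : ∀ i, ‖(T ζ : ∀ _ : I, ℂ) i‖ ≤ s i := by
      intro i
      have hζi := hTapply ζ i
      have hnormeq : ∀ j, ‖((a j i : ℝ) : ℂ) * ζ j‖ = a j i * ‖ζ j‖ := by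
        intro j
        rw [norm_mul, Complex.norm_real, Real.norm_eq_abs, abs_of_nonneg (ha0 j i)]
      have hsumnorm : Summable fun j => ‖((a j i : ℝ) : ℂ) * ζ j‖ := by
        apply Summable.congr (hs i).summable
        intro j
        exact (hnormeq j).symm
      calc ‖(T ζ : ∀ _ : I, ℂ) i‖ = ‖∑' j, ((a j i : ℝ) : ℂ) * ζ j‖ := by rw [hζi.tsum_eq]
        _ ≤ ∑' j, ‖((a j i : ℝ) : ℂ) * ζ j‖ := norm_tsum_le_tsum_norm hsumnorm
        _ = ∑' j, a j i * ‖ζ j‖ := tsum_congr hnormeq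
        _ = s i := (hs i).tsum_eq
    -- the inner products
    have hinnerξ : HasSum (fun i => s i * ‖ζ i‖) (Complex.re (inner ℂ (T ξ) ξ : ℂ)) := by
      have := (lp.hasSum_inner (𝕜 := ℂ) (T ξ) ξ).mapL Complex.reCLM
      convert this using 2 with i
      rw [RCLike.inner_apply', hTξcoord i, hξcoe i, Complex.conj_ofReal]
      simp [← Complex.ofReal_mul]
      rfl
    have hinnerζ := lp.hasSum_inner (𝕜 := ℂ) (T ζ) ζ
    have htermbound : ∀ i, ‖(inner ℂ ((T ζ : ∀ _ : I, ℂ) i) (ζ i) : ℂ)‖ ≤ s i * ‖ζ i‖ := by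
      intro i
      rw [RCLike.inner_apply', norm_mul, RCLike.norm_conj]
      exact mul_le_mul_of_nonneg_right (hbound i) (norm_nonneg _)
    have hsumnorm2 : Summable fun i => ‖(inner ℂ ((T ζ : ∀ _ : I, ℂ) i) (ζ i) : ℂ)‖ :=
      Summable.of_nonneg_of_le (fun i => norm_nonneg _) htermbound hinnerξ.summable
    have hfinal : ‖(inner ℂ (T ζ) ζ : ℂ)‖ ≤ Complex.re (inner ℂ (T ξ) ξ : ℂ) := by
      calc ‖(inner ℂ (T ζ) ζ : ℂ)‖
          = ‖∑' i, (inner ℂ ((T ζ : ∀ _ : I, ℂ) i) (ζ i) : ℂ)‖ := by rw [hinnerζ.tsum_eq]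
        _ ≤ ∑' i, ‖(inner ℂ ((T ζ : ∀ _ : I, ℂ) i) (ζ i) : ℂ)‖ := norm_tsum_le_tsum_norm hsumnorm2
        _ ≤ ∑' i, s i * ‖ζ i‖ := Summable.tsum_le_tsum htermbound hsumnorm2 hinnerξ.summable
        _ = Complex.re (inner ℂ (T ξ) ξ : ℂ) := hinnerξ.tsum_eq
    exact ⟨ξ, hξnorm, le_trans hζ2 hfinal⟩
  -- conclude via the spectrum
  rw [spectrum.mem_iff]
  intro hu
  rw [map_one] at hu
  obtain ⟨u, huv⟩ := hu
  set V : L →L[ℂ] L := ((u⁻¹ : (L →L[ℂ] L)ˣ) : L →L[ℂ] L) with hV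
  have hVS : ∀ x : L, V ((1 - T) x) = x := by
    intro x
    have h1 : V * (1 - T) = 1 := by rw [hV, ← huv]; exact u.inv_mul
    calc V ((1 - T) x) = (V * (1 - T)) x := rfl
      _ = x := by rw [h1]; rfl
  set ε : ℝ := (2 * (‖V‖ + 1) ^ 2)⁻¹ with hε
  have hεpos : 0 < ε := by positivity
  obtain ⟨ξ, hξ1, hξ2⟩ := key ε hεpos
  have hTξ : ‖T ξ‖ ≤ 1 := by
    calc ‖T ξ‖ ≤ ‖T‖ * ‖ξ‖ := T.le_opNorm ξ
      _ = 1 := by rw [hnorm, hξ1, one_mul]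
  have hsub : ‖(1 - T) ξ‖ ^ 2 ≤ 2 * ε := by
    have h1 : (1 - T) ξ = ξ - T ξ := by
      rw [ContinuousLinearMap.sub_apply, ContinuousLinearMap.one_apply]
    rw [h1, @norm_sub_sq ℂ]
    simp only [RCLike.re_to_complex]
    have h2 : Complex.re (inner ℂ ξ (T ξ) : ℂ) = Complex.re (inner ℂ (T ξ) ξ : ℂ) := by
      rw [← inner_conj_symm (T ξ) ξ, Complex.conj_re]
    rw [h2, hξ1]
    nlinarith [hξ2, hTξ, norm_nonneg (T ξ)]
  have h1le : (1 : ℝ) ≤ ‖V‖ * ‖(1 - T) ξ‖ := by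
    calc (1 : ℝ) = ‖ξ‖ := hξ1.symm
      _ = ‖V ((1 - T) ξ)‖ := by rw [hVS ξ]
      _ ≤ ‖V‖ * ‖(1 - T) ξ‖ := V.le_opNorm _
  have hVnn : 0 ≤ ‖V‖ := norm_nonneg V
  have hSnn : 0 ≤ ‖(1 - T) ξ‖ := norm_nonneg _
  have hεval : 2 * ε = ((‖V‖ + 1) ^ 2)⁻¹ := by
    rw [hε]
    field_simp
  rw [hεval] at hsub
  have hlt : (‖V‖ + 1) ^ 2 * ‖(1 - T) ξ‖ ^ 2 ≤ 1 := by
    rw [← hεval] at hsub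
    have : 0 < (‖V‖ + 1) ^ 2 := by positivity
    calc (‖V‖ + 1) ^ 2 * ‖(1 - T) ξ‖ ^ 2 ≤ (‖V‖ + 1) ^ 2 * (2 * ε) :=
          mul_le_mul_of_nonneg_left hsub (le_of_lt this)
      _ = 1 := by rw [hεval]; field_simp
  have hs0 : 0 < ‖(1 - T) ξ‖ := by
    rcases lt_or_eq_of_le hSnn with h' | h'
    · exact h'
    · exfalso; rw [← h'] at h1le; simp at h1le; linarith
  have hfin : (1 : ℝ) < 1 := by
    calc (1 : ℝ) ≤ ‖V‖ ^ 2 * ‖(1 - T) ξ‖ ^ 2 := by nlinarith [h1le, hVnn, hSnn]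
      _ < (‖V‖ + 1) ^ 2 * ‖(1 - T) ξ‖ ^ 2 := by nlinarith [hs0, hVnn]
      _ ≤ 1 := hlt
  exact absurd hfin (lt_irrefl 1)
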